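/- Let T be a self-adjoint operator and A any bounded operator on a Hilbert space H. If T ⊥_B A then T^{2k+1} ⊥_B A for every integer k ≥ 0. -/

import Mathlib

open Filter Topology

local notation "⟪" x ", " y "⟫" => @inner ℂ _ _ x y

set_option maxHeartbeats 1600000 in
lemma bj_aux_norm_one
    {H : Type*} [NormedAddCommGroup H] [InnerProductSpace ℂ H] [CompleteSpace H]
    (T A : H →L[ℂ] H) (hT : IsSelfAdjoint T) (hTn : ‖T‖ = 1)
    (hBJ : ∀ lam : ℂ, 1 ≤ ‖T + lam • A‖) (k : ℕ) (lam : ℂ) :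
    1 ≤ ‖T ^ (2 * k + 1) + lam • A‖ := by
  have hSym : ∀ x y : H, ⟪T x, y⟫ = ⟪x, T y⟫ :=
    ContinuousLinearMap.isSelfAdjoint_iff_isSymmetric.mp hT
  have hTw : ∀ w : H, ‖T w‖ ≤ ‖w‖ := by
    intro w; simpa [hTn] using T.le_opNorm w
  -- the sequence of parameters
  set t : ℕ → ℝ := fun m => ((m : ℝ) + 1)⁻¹ with ht_def
  have ht0 : ∀ m, 0 < t m := fun m => by positivity
  have ht1 : ∀ m, t m ≤ 1 := by
    intro m
    rw [ht_def]
    rw [inv_le_one_iff₀]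
    right; linarith [Nat.cast_nonneg (α := ℝ) m]
  have ht_tend : Tendsto t atTop (𝓝 0) := by
    simpa [ht_def, one_div] using tendsto_one_div_add_atTop_nhds_zero_nat (𝕜 := ℝ)
  -- choose near-maximizing vectors
  have hchoice : ∀ m : ℕ, ∃ x : H, ‖x‖ < 1 ∧
      1 - (t m)^2 < ‖(T + ((t m : ℂ) * lam) • A) x‖ := by
    intro m
    apply ContinuousLinearMap.exists_lt_apply_of_lt_opNorm
    have := hBJ ((t m : ℂ) * lam)
    nlinarith [ht0 m]
  choose x hx1 hx2 using hchoice
  set u : ℕ → H := fun m => T (x m) with hu_def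
  set b : ℕ → ℝ := fun m => (lam * ⟪u m, A (x m)⟫).re with hb_def
  have hu1 : ∀ m, ‖u m‖ ≤ 1 := fun m => (hTw (x m)).trans (hx1 m).le
  have hxA : ∀ m, ‖A (x m)‖ ≤ ‖A‖ := by
    intro m
    calc ‖A (x m)‖ ≤ ‖A‖ * ‖x m‖ := A.le_opNorm _
    _ ≤ ‖A‖ * 1 := by
        exact mul_le_mul_of_nonneg_left (hx1 m).le (norm_nonneg A)
    _ = ‖A‖ := mul_one _
  have hb_abs : ∀ m, |b m| ≤ ‖lam‖ * ‖A‖ := by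
    intro m
    calc |b m| ≤ ‖lam * ⟪u m, A (x m)⟫‖ := Complex.abs_re_le_norm _
    _ = ‖lam‖ * ‖⟪u m, A (x m)⟫‖ := norm_mul _ _
    _ ≤ ‖lam‖ * (‖u m‖ * ‖A (x m)‖) :=
        mul_le_mul_of_nonneg_left (norm_inner_le_norm _ _) (norm_nonneg _)
    _ ≤ ‖lam‖ * (1 * ‖A‖) := by
        apply mul_le_mul_of_nonneg_left _ (norm_nonneg _)
        exact mul_le_mul (hu1 m) (hxA m) (norm_nonneg _) zero_le_one
    _ = ‖lam‖ * ‖A‖ := by ring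
  -- key expansion inequality
  have hkey : ∀ m, (1 - (t m)^2)^2 ≤
      ‖u m‖^2 + 2 * t m * b m + (t m)^2 * ‖lam‖^2 * ‖A (x m)‖^2 := by
    intro m
    have h1 : (T + ((t m : ℂ) * lam) • A) (x m) = u m + ((t m : ℂ) * lam) • A (x m) := by
      simp [hu_def]
    have h2 : ‖u m + ((t m : ℂ) * lam) • A (x m)‖^2
        = ‖u m‖^2 + 2 * (t m * b m) + (t m)^2 * ‖lam‖^2 * ‖A (x m)‖^2 := by
      rw [norm_add_sq (𝕜 := ℂ)]
      congr 1
      · congr 1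
        rw [inner_smul_right]
        simp [hb_def, Complex.re_ofReal_mul, mul_assoc]
      · rw [norm_smul]
        simp [norm_mul, abs_of_pos (ht0 m)]
        ring
    have h3 : 1 - (t m)^2 < ‖(T + ((t m : ℂ) * lam) • A) (x m)‖ := hx2 m
    rw [h1] at h3
    have h4 : 0 ≤ 1 - (t m)^2 := by nlinarith [ht0 m, ht1 m]
    nlinarith [h3, h4, norm_nonneg (u m + ((t m : ℂ) * lam) • A (x m))]
  set C₁ : ℝ := 2 + 2 * (‖lam‖ * ‖A‖) + ‖lam‖^2 * ‖A‖^2 with hC₁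
  set C₂ : ℝ := 2 + ‖lam‖^2 * ‖A‖^2 with hC₂
  have hAx_sq : ∀ m, ‖A (x m)‖^2 ≤ ‖A‖^2 := by
    intro m; nlinarith [norm_nonneg (A (x m)), hxA m]
  have hG1 : ∀ m, 1 - C₁ * t m ≤ ‖u m‖^2 := by
    intro m
    have hk := hkey m
    have h1 := hb_abs m
    have h3 := ht0 m
    have h4 := ht1 m
    have h5 := hAx_sq m
    have h7 : t m ^ 2 ≤ t m := by nlinarith
    have h8 : 2 * t m * b m ≤ 2 * t m * (‖lam‖ * ‖A‖) := by
      have := (abs_le.mp h1).2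
      nlinarith
    have h9 : t m ^ 2 * ‖lam‖ ^ 2 * ‖A (x m)‖ ^ 2 ≤ t m * (‖lam‖ ^ 2 * ‖A‖ ^ 2) := by
      have h10 : t m ^ 2 * (‖lam‖ ^ 2 * ‖A (x m)‖ ^ 2) ≤ t m * (‖lam‖ ^ 2 * ‖A‖ ^ 2) := by
        apply mul_le_mul h7 (mul_le_mul_of_nonneg_left h5 (sq_nonneg _))
          (by positivity) (by positivity)
      linarith [h10, mul_assoc (t m ^ 2) (‖lam‖ ^ 2) (‖A (x m)‖ ^ 2)]
    nlinarith [sq_nonneg (t m ^ 2), h8, h9, h7, hk]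
  have hG2 : ∀ m, -(C₂ * t m) ≤ b m := by
    intro m
    have hk := hkey m
    have h3 := ht0 m
    have h4 := ht1 m
    have h5 := hAx_sq m
    have h6 : ‖u m‖^2 ≤ 1 := by nlinarith [hu1 m, norm_nonneg (u m)]
    have h9 : t m ^ 2 * ‖lam‖ ^ 2 * ‖A (x m)‖ ^ 2 ≤ t m ^ 2 * ‖lam‖ ^ 2 * ‖A‖ ^ 2 :=
      mul_le_mul_of_nonneg_left h5 (by positivity)
    have e1 : (1 - t m ^ 2) ^ 2 = 1 - 2 * t m ^ 2 + t m ^ 2 * t m ^ 2 := by ring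
    have h13 : -(2 * t m ^ 2) - t m ^ 2 * ‖lam‖ ^ 2 * ‖A‖ ^ 2 ≤ 2 * t m * b m := by
      linarith [hk, h6, h9, e1, mul_self_nonneg (t m ^ 2)]
    have h12 : 2 * t m * (-(C₂ * t m)) ≤ 2 * t m * b m := by
      rw [hC₂]
      have hnn : (0:ℝ) ≤ t m ^ 2 * ‖lam‖ ^ 2 * ‖A‖ ^ 2 := by positivity
      have hnn2 : (0:ℝ) ≤ t m ^ 2 := sq_nonneg _
      linarith [h13, hnn, hnn2]
    exact (mul_le_mul_iff_right₀ (by positivity : (0:ℝ) < 2 * t m)).mp h12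
  -- convergence facts
  have hu_tend : Tendsto (fun m => ‖u m‖) atTop (𝓝 1) := by
    have hlow : Tendsto (fun m => 1 - C₁ * t m) atTop (𝓝 1) := by
      have h1 : Tendsto (fun m => C₁ * t m) atTop (𝓝 0) := by
        simpa using ht_tend.const_mul C₁
      simpa using tendsto_const_nhds.sub h1
    apply tendsto_of_tendsto_of_tendsto_of_le_of_le hlow tendsto_const_nhds
    · intro m
      calc 1 - C₁ * t m ≤ ‖u m‖^2 := hG1 m
      _ ≤ ‖u m‖ := by nlinarith [hu1 m, norm_nonneg (u m)]
    · intro m; exact hu1 m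
  have hbmin_tend : Tendsto (fun m => min (b m) 0) atTop (𝓝 0) := by
    have hlow : Tendsto (fun m => -(C₂ * t m)) atTop (𝓝 0) := by
      simpa using (ht_tend.const_mul C₂).neg
    apply tendsto_of_tendsto_of_tendsto_of_le_of_le hlow tendsto_const_nhds
    · intro m
      apply le_min (hG2 m)
      have h1 : 0 ≤ C₂ * t m := by
        rw [hC₂]; positivity
      linarith
    · intro m; exact min_le_right _ _
  -- the error vectors
  set c : ℕ → ℂ := fun m => ((‖u m‖^2 : ℝ) : ℂ) with hc_def
  have hc_norm : ∀ m, ‖c m‖ = ‖u m‖^2 := by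
    intro m
    rw [hc_def]
    simp [abs_of_nonneg (sq_nonneg ‖u m‖)]
  have hc_le : ∀ m, ‖c m‖ ≤ 1 := by
    intro m
    rw [hc_norm m]
    nlinarith [hu1 m, norm_nonneg (u m)]
  set e : ℕ → H := fun m => T (u m) - c m • x m with he_def
  have he_sq : ∀ m, ‖e m‖^2 ≤ 1 - ‖u m‖^2 * ‖u m‖^2 := by
    intro m
    have h1 : ‖e m‖^2 = ‖T (u m)‖^2 - 2 * Complex.re ⟪T (u m), c m • x m⟫ + ‖c m • x m‖^2 := by
      rw [he_def]
      exact norm_sub_sq (𝕜 := ℂ) _ _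
    have h2 : ⟪T (u m), c m • x m⟫ = c m * ⟪u m, u m⟫ := by
      rw [inner_smul_right, hSym]
    have h3 : (c m * ⟪u m, u m⟫).re = ‖u m‖^2 * ‖u m‖^2 := by
      rw [Complex.mul_re]
      have him : (⟪u m, u m⟫ : ℂ).im = 0 := by
        simpa [← RCLike.im_to_complex] using inner_self_im (𝕜 := ℂ) (u m)
      have hre : (⟪u m, u m⟫ : ℂ).re = ‖u m‖^2 := by
        simpa [← RCLike.re_to_complex] using inner_self_eq_norm_sq (𝕜 := ℂ) (u m)
      rw [him, hre, hc_def]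
      simp only [Complex.ofReal_re, Complex.ofReal_im]
      ring
    have h4 : ‖c m • x m‖^2 ≤ ‖u m‖^2 * ‖u m‖^2 := by
      rw [norm_smul, hc_norm m]
      have hx2' : ‖x m‖^2 ≤ 1 := by nlinarith [hx1 m, norm_nonneg (x m)]
      calc (‖u m‖^2 * ‖x m‖)^2 = (‖u m‖^2)^2 * ‖x m‖^2 := by ring
      _ ≤ (‖u m‖^2)^2 * 1 := mul_le_mul_of_nonneg_left hx2' (by positivity)
      _ = ‖u m‖^2 * ‖u m‖^2 := by ring
    have h5 : ‖T (u m)‖^2 ≤ ‖u m‖^2 := by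
      nlinarith [hTw (u m), norm_nonneg (T (u m)), norm_nonneg (u m)]
    have h6 : ‖u m‖^2 ≤ 1 := by nlinarith [hu1 m, norm_nonneg (u m)]
    rw [h1, h2, h3]
    nlinarith [sq_nonneg ‖u m‖]
  have he_tend : Tendsto (fun m => ‖e m‖) atTop (𝓝 0) := by
    have hsq : Tendsto (fun m => ‖e m‖^2) atTop (𝓝 0) := by
      have hup : Tendsto (fun m => 1 - ‖u m‖^2 * ‖u m‖^2) atTop (𝓝 0) := by
        have h1 := (hu_tend.pow 2).mul (hu_tend.pow 2)
        have h2 := tendsto_const_nhds (x := (1:ℝ)) (f := atTop (α := ℕ)) |>.sub h1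
        simpa using h2
      apply tendsto_of_tendsto_of_tendsto_of_le_of_le tendsto_const_nhds hup
      · intro m; exact sq_nonneg _
      · intro m; exact he_sq m
    have h2 : ∀ m, Real.sqrt (‖e m‖^2) = ‖e m‖ := fun m => Real.sqrt_sq (norm_nonneg _)
    have h3 := hsq.sqrt
    simpa [h2] using h3
  -- iterated error bound by induction
  have hind : ∀ j : ℕ, ∀ m, ‖(T ^ (2*j+1)) (x m) - (c m)^j • u m‖ ≤ (j : ℝ) * ‖e m‖ := by
    intro j
    induction j with
    | zero => intro m; simp [hu_def]
    | succ j ih =>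
      intro m
      have hp : (T ^ (2*(j+1)+1)) (x m) = T (T ((T ^ (2*j+1)) (x m))) := by
        have h1 : 2*(j+1)+1 = (2*j+1) + 1 + 1 := by ring
        rw [h1, pow_succ', pow_succ']
        rfl
      have key : (T ^ (2*(j+1)+1)) (x m) - (c m)^(j+1) • u m
          = T (T ((T ^ (2*j+1)) (x m) - (c m)^j • u m)) + (c m)^j • T (e m) := by
        rw [hp, he_def]
        have hu' : T (x m) = u m := rfl
        simp only [map_sub, map_smul, hu']
        rw [pow_succ]
        module
      rw [key]
      calc ‖T (T ((T ^ (2*j+1)) (x m) - (c m)^j • u m)) + (c m)^j • T (e m)‖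
          ≤ ‖T (T ((T ^ (2*j+1)) (x m) - (c m)^j • u m))‖ + ‖(c m)^j • T (e m)‖ :=
            norm_add_le _ _
      _ ≤ ‖(T ^ (2*j+1)) (x m) - (c m)^j • u m‖ + ‖e m‖ := by
          apply add_le_add
          · exact (hTw _).trans (hTw _)
          · rw [norm_smul, norm_pow]
            have h7 : ‖c m‖^j ≤ 1 := pow_le_one₀ (norm_nonneg _) (hc_le m)
            simpa using mul_le_mul h7 (hTw (e m)) (norm_nonneg _) zero_le_one
      _ ≤ (j : ℝ) * ‖e m‖ + ‖e m‖ := add_le_add (ih m) le_rfl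
      _ = ((j+1 : ℕ) : ℝ) * ‖e m‖ := by push_cast; ring
  set E : ℕ → H := fun m => (T ^ (2*k+1)) (x m) - (c m)^k • u m with hE_def
  have hE_tend : Tendsto (fun m => ‖E m‖) atTop (𝓝 0) := by
    apply tendsto_of_tendsto_of_tendsto_of_le_of_le tendsto_const_nhds
      (by simpa using he_tend.const_mul (k:ℝ))
    · intro m; exact norm_nonneg _
    · intro m; exact hind k m
  set P : H →L[ℂ] H := T ^ (2*k+1) + lam • A with hP_def
  have hPx : ∀ m, ‖P (x m)‖ ≤ ‖P‖ := by
    intro m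
    calc ‖P (x m)‖ ≤ ‖P‖ * ‖x m‖ := P.le_opNorm _
    _ ≤ ‖P‖ * 1 := mul_le_mul_of_nonneg_left (hx1 m).le (norm_nonneg _)
    _ = ‖P‖ := mul_one _
  have hTnx : ∀ m, (T ^ (2*k+1)) (x m) = E m + (c m)^k • u m := by
    intro m
    rw [hE_def]
    module
  have hRe : ∀ m, (⟪(T ^ (2*k+1)) (x m), lam • A (x m)⟫ : ℂ).re
      = (‖u m‖^2)^k * b m + (lam * ⟪E m, A (x m)⟫).re := by
    intro m
    rw [inner_smul_right, hTnx m, inner_add_left, inner_smul_left]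
    have hconj : (starRingEnd ℂ) ((c m)^k) = (((‖u m‖^2)^k : ℝ) : ℂ) := by
      rw [hc_def]
      beta_reduce
      rw [map_pow, Complex.conj_ofReal, ← Complex.ofReal_pow]
    rw [hconj, mul_add, Complex.add_re]
    have h1 : lam * ((((‖u m‖^2)^k : ℝ) : ℂ) * ⟪u m, A (x m)⟫)
        = (((‖u m‖^2)^k : ℝ) : ℂ) * (lam * ⟪u m, A (x m)⟫) := by ring
    rw [h1, Complex.re_ofReal_mul]
    simp only [hb_def]
    ring
  have hexp : ∀ m, ‖P (x m)‖^2 = ‖(T ^ (2*k+1)) (x m)‖^2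
      + 2 * ((‖u m‖^2)^k * b m + (lam * ⟪E m, A (x m)⟫).re) + ‖lam‖^2 * ‖A (x m)‖^2 := by
    intro m
    have h1 : P (x m) = (T ^ (2*k+1)) (x m) + lam • A (x m) := by
      rw [hP_def]; simp
    rw [h1, norm_add_sq (𝕜 := ℂ)]
    have h2 : ‖lam • A (x m)‖^2 = ‖lam‖^2 * ‖A (x m)‖^2 := by
      rw [norm_smul]; ring
    rw [h2]
    simp only [RCLike.re_to_complex]
    rw [hRe m]
  have hlow : ∀ m, (max (‖u m‖^(2*k+1) - ‖E m‖) 0)^2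
      + 2*((‖u m‖^2)^k * min (b m) 0) - 2*(‖lam‖*‖A‖)*‖E m‖ ≤ ‖P‖^2 := by
    intro m
    have h1 : ‖u m‖^(2*k+1) - ‖E m‖ ≤ ‖(T ^ (2*k+1)) (x m)‖ := by
      have h2 : ‖(c m)^k • u m‖ = ‖u m‖^(2*k+1) := by
        rw [norm_smul, norm_pow, hc_norm m, ← pow_mul, ← pow_succ]
      have h2' : (T ^ (2*k+1)) (x m) - E m = (c m)^k • u m := by
        rw [hE_def]; module
      have h3 : ‖(c m)^k • u m‖ ≤ ‖(T ^ (2*k+1)) (x m)‖ + ‖E m‖ := by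
        rw [← h2']
        exact norm_sub_le _ _
      linarith [h2, h3]
    have hmax : max (‖u m‖^(2*k+1) - ‖E m‖) 0 ≤ ‖(T ^ (2*k+1)) (x m)‖ :=
      max_le h1 (norm_nonneg _)
    have hsq : (max (‖u m‖^(2*k+1) - ‖E m‖) 0)^2 ≤ ‖(T ^ (2*k+1)) (x m)‖^2 :=
      pow_le_pow_left₀ (le_max_right _ _) hmax 2
    have h4 : (‖u m‖^2)^k * min (b m) 0 ≤ (‖u m‖^2)^k * b m :=
      mul_le_mul_of_nonneg_left (min_le_left _ _) (by positivity)
    have h5 : -(‖lam‖ * ‖A‖ * ‖E m‖) ≤ (lam * ⟪E m, A (x m)⟫).re := by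
      have h6 : |(lam * ⟪E m, A (x m)⟫).re| ≤ ‖lam * ⟪E m, A (x m)⟫‖ :=
        Complex.abs_re_le_norm _
      have h7 : ‖lam * ⟪E m, A (x m)⟫‖ ≤ ‖lam‖ * (‖E m‖ * ‖A‖) := by
        rw [norm_mul]
        apply mul_le_mul_of_nonneg_left _ (norm_nonneg lam)
        calc ‖⟪E m, A (x m)⟫‖ ≤ ‖E m‖ * ‖A (x m)‖ := norm_inner_le_norm _ _
        _ ≤ ‖E m‖ * ‖A‖ := mul_le_mul_of_nonneg_left (hxA m) (norm_nonneg _)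
      have h8 := (abs_le.mp (h6.trans h7)).1
      nlinarith [h8]
    have h8 := hexp m
    have h9 : ‖P (x m)‖^2 ≤ ‖P‖^2 := pow_le_pow_left₀ (norm_nonneg _) (hPx m) 2
    have h10 : (0:ℝ) ≤ ‖lam‖^2 * ‖A (x m)‖^2 := by positivity
    linarith
  have hg_tend : Tendsto (fun m => (max (‖u m‖^(2*k+1) - ‖E m‖) 0)^2
      + 2*((‖u m‖^2)^k * min (b m) 0) - 2*(‖lam‖*‖A‖)*‖E m‖) atTop (𝓝 1) := by
    have hm1 : Tendsto (fun m => max (‖u m‖^(2*k+1) - ‖E m‖) 0) atTop (𝓝 1) := by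
      have h1 := ((hu_tend.pow (2*k+1)).sub hE_tend).max
        (tendsto_const_nhds (x := (0:ℝ)) (f := atTop (α := ℕ)))
      simpa using h1
    have hm2 : Tendsto (fun m => (max (‖u m‖^(2*k+1) - ‖E m‖) 0)^2) atTop (𝓝 1) := by
      simpa using hm1.pow 2
    have hm3 : Tendsto (fun m => 2*((‖u m‖^2)^k * min (b m) 0)) atTop (𝓝 0) := by
      have h1 := (((hu_tend.pow 2).pow k).mul hbmin_tend).const_mul (2:ℝ)
      simpa using h1
    have hm4 : Tendsto (fun m => 2*(‖lam‖*‖A‖)*‖E m‖) atTop (𝓝 0) := by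
      simpa using hE_tend.const_mul (2*(‖lam‖*‖A‖))
    have h1 := (hm2.add hm3).sub hm4
    simpa using h1
  have hfin : (1:ℝ) ≤ ‖P‖^2 := le_of_tendsto hg_tend (Filter.Eventually.of_forall hlow)
  have hP0 := norm_nonneg P
  nlinarith [hfin, hP0]

theorem selfAdjoint_odd_power_birkhoffJames
    {H : Type*} [NormedAddCommGroup H] [InnerProductSpace ℂ H] [CompleteSpace H]
    (T A : H →L[ℂ] H) (hT : IsSelfAdjoint T)
    (hBJ : ∀ lam : ℂ, ‖T + lam • A‖ ≥ ‖T‖) :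
    ∀ k : ℕ, ∀ lam : ℂ, ‖T ^ (2 * k + 1) + lam • A‖ ≥ ‖T ^ (2 * k + 1)‖ := by
  intro k lam
  by_cases hM : ‖T‖ = 0
  · have hT0 : T = 0 := norm_eq_zero.mp hM
    rw [hT0, zero_pow (by omega : 2*k+1 ≠ 0)]
    simp
  · have hMpos : 0 < ‖T‖ := lt_of_le_of_ne (norm_nonneg T) (Ne.symm hM)
    set M := ‖T‖ with hM_def
    have hMC : (M:ℂ) ≠ 0 := by
      simpa using ne_of_gt hMpos
    set T' : H →L[ℂ] H := ((M : ℂ))⁻¹ • T with hT'_def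
    have hT' : IsSelfAdjoint T' := by
      have hstar : star ((M:ℂ)⁻¹) = ((M:ℂ))⁻¹ := by
        simp [Complex.star_def, Complex.conj_ofReal]
      exact IsSelfAdjoint.smul hstar hT
    have hnormMC : ‖((M:ℂ))⁻¹‖ = M⁻¹ := by
      rw [norm_inv, Complex.norm_real, Real.norm_eq_abs, abs_of_pos hMpos]
    have hT'n : ‖T'‖ = 1 := by
      rw [hT'_def, norm_smul, hnormMC]
      exact inv_mul_cancel₀ (ne_of_gt hMpos)
    have hBJ' : ∀ mu : ℂ, 1 ≤ ‖T' + mu • A‖ := by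
      intro mu
      have h1 : T' + mu • A = ((M:ℂ))⁻¹ • (T + ((M:ℂ) * mu) • A) := by
        rw [smul_add, smul_smul, inv_mul_cancel_left₀ hMC, hT'_def]
      rw [h1, norm_smul, hnormMC]
      have h3 := hBJ ((M:ℂ)*mu)
      calc (1:ℝ) = M⁻¹ * M := (inv_mul_cancel₀ (ne_of_gt hMpos)).symm
      _ ≤ M⁻¹ * ‖T + ((M:ℂ)*mu) • A‖ :=
          mul_le_mul_of_nonneg_left h3 (by positivity)
    have hkey := bj_aux_norm_one T' A hT' hT'n hBJ' k (((M:ℂ)^(2*k+1))⁻¹ * lam)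
    have e1 : ((M:ℂ)^(2*k+1)) • (T' ^ (2*k+1)) = T ^ (2*k+1) := by
      rw [hT'_def, smul_pow, smul_smul, ← mul_pow, mul_inv_cancel₀ hMC, one_pow, one_smul]
    have e2 : ((M:ℂ)^(2*k+1)) • ((((M:ℂ)^(2*k+1))⁻¹ * lam) • A) = lam • A := by
      rw [smul_smul, mul_inv_cancel_left₀ (pow_ne_zero _ hMC)]
    have htrans : T ^ (2*k+1) + lam • A
        = ((M:ℂ)^(2*k+1)) • (T' ^ (2*k+1) + (((M:ℂ)^(2*k+1))⁻¹ * lam) • A) := by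
      rw [smul_add, e1, e2]
    have h4 : ‖(M:ℂ)^(2*k+1)‖ = M^(2*k+1) := by
      rw [norm_pow, Complex.norm_real, Real.norm_eq_abs, abs_of_pos hMpos]
    have h5 : ‖T ^ (2*k+1)‖ ≤ M^(2*k+1) := norm_pow_le' T (by omega)
    rw [ge_iff_le, htrans, norm_smul, h4]
    calc ‖T^(2*k+1)‖ ≤ M^(2*k+1) := h5
    _ = M^(2*k+1) * 1 := (mul_one _).symm
    _ ≤ M^(2*k+1) * ‖T' ^ (2*k+1) + (((M:ℂ)^(2*k+1))⁻¹ * lam) • A‖ :=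
        mul_le_mul_of_nonneg_left hkey (by positivity)
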